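/- Let G be a nilpotent group of nilpotency class c, and suppose the abelianization G/G' has exponent n. Then the exponent of G divides n^c. -/

import Mathlib

open Subgroup
open scoped commutatorElement

/-- If every element's `n`-th power lies in the commutator subgroup, then `n`-th powers
move one step down the lower central series. -/
theorem aux_pow_step {G : Type*} [Group G] (n : ℕ)
    (hn' : ∀ x : G, x ^ n ∈ commutator G) (i : ℕ) :
    ∀ y ∈ Subgroup.lowerCentralSeries (⊤ : Subgroup G) i, y ^ n ∈ Subgroup.lowerCentralSeries (⊤ : Subgroup G) (i + 1) := by
  induction i with
  | zero =>
    intro y _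
    exact hn' y
  | succ j _ =>
    intro y hy
    set N : Subgroup G := Subgroup.lowerCentralSeries (⊤ : Subgroup G) (j + 2) with hN
    set π : G →* G ⧸ N := QuotientGroup.mk' N with hπ
    -- every element of `lowerCentralSeries G (j+1)` becomes central in the quotient
    have central : ∀ z ∈ Subgroup.lowerCentralSeries (⊤ : Subgroup G) (j + 1), π z ∈ Subgroup.center (G ⧸ N) := by
      intro z hz
      rw [Subgroup.mem_center_iff]
      intro q
      obtain ⟨g, rfl⟩ := QuotientGroup.mk'_surjective N q
      have hcomm : ⁅z, g⁆ ∈ N := by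
        rw [hN]
        show ⁅z, g⁆ ∈ Subgroup.lowerCentralSeries (⊤ : Subgroup G) (j + 1 + 1)
        rw [Subgroup.lowerCentralSeries_succ]
        exact commutator_mem_commutator hz (Subgroup.mem_top g)
      have h1 : π ⁅z, g⁆ = 1 := (QuotientGroup.eq_one_iff _).mpr hcomm
      have h2 : π z * π g * (π z)⁻¹ * (π g)⁻¹ = 1 := by
        simpa [commutatorElement_def] using h1
      have h3 := mul_eq_one_iff_eq_inv.mp h2
      rw [eq_comm, ← mul_inv_eq_iff_eq_mul, h3]
      group
      rfl
    suffices h : (π y) ^ n = 1 by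
      have : π (y ^ n) = 1 := by rw [map_pow, h]
      exact (QuotientGroup.eq_one_iff _).mp this
    -- `y` lies in the closure of commutators `⁅a, b⁆` with `a ∈ γ_{j+1}`
    have hy' : y ∈ Subgroup.closure
        {x : G | ∃ a ∈ Subgroup.lowerCentralSeries (⊤ : Subgroup G) j, ∃ b ∈ (⊤ : Subgroup G), ⁅a, b⁆ = x} := by
      rw [Subgroup.lowerCentralSeries_succ] at hy
      exact hy
    have hclosure_le : Subgroup.closure
        {x : G | ∃ a ∈ Subgroup.lowerCentralSeries (⊤ : Subgroup G) j, ∃ b ∈ (⊤ : Subgroup G), ⁅a, b⁆ = x}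
        ≤ Subgroup.lowerCentralSeries (⊤ : Subgroup G) (j + 1) := by
      rw [← Subgroup.commutator_def]
      exact le_of_eq (Subgroup.lowerCentralSeries_succ ⊤ j).symm
    refine Subgroup.closure_induction ?_ ?_ ?_ ?_ hy'
    · rintro x ⟨a, ha, b, -, rfl⟩
      -- the map `g ↦ π ⁅a, g⁆` is a homomorphism with central values
      have hcen : ∀ g : G, π ⁅a, g⁆ ∈ Subgroup.center (G ⧸ N) := by
        intro g
        refine central _ ?_
        rw [Subgroup.lowerCentralSeries_succ]
        exact commutator_mem_commutator ha (Subgroup.mem_top g)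
      let f : G →* G ⧸ N :=
        { toFun := fun g => π ⁅a, g⁆
          map_one' := by simp
          map_mul' := by
            intro g h
            show π ⁅a, g * h⁆ = π ⁅a, g⁆ * π ⁅a, h⁆
            have key : ⁅a, g * h⁆ = ⁅a, g⁆ * (g * ⁅a, h⁆ * g⁻¹) := by
              simp only [commutatorElement_def]; group
            rw [key]
            simp only [map_mul, map_inv]
            rw [Subgroup.mem_center_iff.mp (hcen h) (π g)]
            group }
        -- `f` kills the commutator subgroup
      have hker : ∀ w ∈ commutator G, f w = 1 := by
        intro w hw
        have : commutator G ≤ f.ker := by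
          rw [_root_.commutator_def, Subgroup.commutator_le]
          intro u _ v _
          rw [MonoidHom.mem_ker, map_commutatorElement]
          have := Subgroup.mem_center_iff.mp (hcen u) (f v)
          rw [commutatorElement_def]
          show π ⁅a, u⁆ * f v * (π ⁅a, u⁆)⁻¹ * (f v)⁻¹ = 1
          rw [← this]
          group
        exact this hw
      have : π ⁅a, b⁆ = f b := rfl
      rw [this, ← map_pow, hker _ (hn' b)]
    · simp
    · intro z w hz hw hz' hw'
      have hzc := central z (hclosure_le hz)
      have hcomm : Commute (π z) (π w) := (Subgroup.mem_center_iff.mp hzc (π w)).symm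
      rw [map_mul, hcomm.mul_pow, hz', hw', one_mul]
    · intro z _ hz'
      rw [map_inv, inv_pow, hz', inv_one]

/-- If `G` is nilpotent of class `c` and `G/G'` has exponent `n`, then the exponent of `G`
divides `n ^ c`. -/
theorem stmt_5 {G : Type*} [Group G] [Group.IsNilpotent G] (c n : ℕ)
    (hc : Group.nilpotencyClass G = c)
    (hn : ∀ x : Abelianization G, x ^ n = 1) :
    ∀ x : G, x ^ (n ^ c) = 1 := by
  have hn' : ∀ x : G, x ^ n ∈ commutator G := by
    intro x
    have : Abelianization.of (x ^ n) = 1 := by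
      rw [map_pow]; exact hn (Abelianization.of x)
    exact (QuotientGroup.eq_one_iff _).mp this
  have key : ∀ i : ℕ, ∀ x : G, x ^ (n ^ i) ∈ Subgroup.lowerCentralSeries (⊤ : Subgroup G) i := by
    intro i
    induction i with
    | zero => intro x; simp [Subgroup.lowerCentralSeries_zero]
    | succ j ih =>
      intro x
      have : x ^ n ^ (j + 1) = (x ^ n ^ j) ^ n := by rw [← pow_mul, pow_succ]
      rw [this]
      exact aux_pow_step n hn' j _ (ih x)
  intro x
  have hbot : Subgroup.lowerCentralSeries (⊤ : Subgroup G) c = ⊥ := by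
    rw [← hc]; exact Subgroup.lowerCentralSeries_nilpotencyClass
  have := key c x
  rw [hbot, Subgroup.mem_bot] at this
  exact this
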